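/- Fix a prime power q and integers n ≥ 2 and 2 ≤ d ≤ n. For each m ≥ n let ℓ_m = (B_m − 1)/(q−1), where B_m = Σ_{i=0}^{d−1} [n choose i]_q · ∏_{j=0}^{i−1}(q^m−q^j) is the number of n×m matrices over F_q of rank at most d−1. Then the ratio C((q^{mn}−q^{m(n−d+1)})/(q−1), ℓ_m) / C((q^{mn}−1)/(q−1), ℓ_m) converges, as m → +∞, to exp(−[n choose d−1]_q/(q−1)). -/

import Mathlib

open Filter

/-- The q-binomial (Gaussian) coefficient `[i choose j]_q`, as a rational number, via the
product formula `∏_{l=0}^{j−1} (q^i−q^l)/(q^j−q^l)`. -/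
def qBin (q i j : ℕ) : ℚ :=
  ∏ l ∈ Finset.range j, ((q : ℚ) ^ i - q ^ l) / ((q : ℚ) ^ j - q ^ l)

open Real Finset


section Helpers

lemma tendsto_c_div_pow (Q : ℝ) (hQ : 1 < Q) (c : ℝ) :
    Tendsto (fun m : ℕ => c / Q ^ m) atTop (nhds 0) := by
  have h0 : (0:ℝ) < Q := by linarith
  have h := (tendsto_pow_atTop_nhds_zero_of_lt_one (by positivity : (0:ℝ) ≤ 1/Q)
    (by rw [div_lt_one h0]; exact hQ)).const_mul c
  rw [mul_zero] at h
  refine h.congr fun m => ?_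
  rw [div_pow, one_pow, mul_one_div]

lemma tendsto_one_div_pow_mul (Q : ℝ) (hQ : 1 < Q) (a : ℕ) (ha : 1 ≤ a) :
    Tendsto (fun m : ℕ => 1 / Q ^ (m * a)) atTop (nhds 0) := by
  have h1 : 1 < Q ^ a := by exact one_lt_pow₀ hQ (by omega)
  have h := tendsto_c_div_pow (Q ^ a) h1 1
  refine h.congr fun m => ?_
  rw [← pow_mul, mul_comm a m]

lemma tendsto_pow_mul_div_pow_mul (Q : ℝ) (hQ : 1 < Q) (a b : ℕ) (hab : a < b) :
    Tendsto (fun m : ℕ => Q ^ (m * a) / Q ^ (m * b)) atTop (nhds 0) := by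
  have h0 : (0:ℝ) < Q := by linarith
  have h := tendsto_pow_atTop_nhds_zero_of_lt_one
    (show (0:ℝ) ≤ Q ^ a / Q ^ b by positivity)
    (by rw [div_lt_one (by positivity)]; exact pow_lt_pow_right₀ hQ hab)
  refine h.congr fun m => ?_
  rw [div_pow, ← pow_mul, ← pow_mul, mul_comm a m, mul_comm b m]

lemma lemP (Q : ℝ) (hQ : 1 < Q) (i : ℕ) :
    Tendsto (fun m : ℕ => (∏ j ∈ Finset.range i, (Q ^ m - Q ^ j)) / Q ^ (m * i))
      atTop (nhds 1) := by
  have hQ0 : (0:ℝ) < Q := by linarith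
  have h1 : ∀ m : ℕ, (∏ j ∈ Finset.range i, (Q ^ m - Q ^ j)) / Q ^ (m * i)
      = ∏ j ∈ Finset.range i, ((Q ^ m - Q ^ j) / Q ^ m) := by
    intro m
    rw [pow_mul, Finset.prod_div_distrib, Finset.prod_const, Finset.card_range]
  have h2 : ∀ j : ℕ, Tendsto (fun m : ℕ => (Q ^ m - Q ^ j) / Q ^ m) atTop (nhds 1) := by
    intro j
    have h3 : Tendsto (fun m : ℕ => 1 - Q ^ j / Q ^ m) atTop (nhds (1 - 0)) :=
      tendsto_const_nhds.sub (tendsto_c_div_pow Q hQ (Q ^ j))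
    rw [sub_zero] at h3
    refine h3.congr fun m => ?_
    rw [sub_div, div_self (by positivity)]
  have h4 := tendsto_finset_prod (Finset.range i) (fun j _ => h2 j)
  rw [Finset.prod_const_one] at h4
  exact h4.congr fun m => (h1 m).symm

lemma dvd_pow_sub_pow_of_le (q a b : ℕ) (hab : a ≤ b) : q - 1 ∣ q ^ b - q ^ a := by
  have h1 : q - 1 ∣ q ^ (b - a) - 1 := by
    simpa using Nat.sub_dvd_pow_sub_pow q 1 (b - a)
  have h2 : q ^ a * (q ^ (b - a) - 1) = q ^ b - q ^ a := by
    rw [Nat.mul_sub_left_distrib, mul_one, ← pow_add, Nat.add_sub_cancel' hab]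
  exact h2 ▸ h1.mul_left _

end Helpers
open Filter Real

/-- If `r m → 1`, eventually `0 < r m < 1`, and `ℓ m * (1 - r m) → c`, then
`r m ^ ℓ m → exp (-c)`. -/
lemma lemA (r : ℕ → ℝ) (ℓ : ℕ → ℕ) (c : ℝ)
    (hr0 : ∀ᶠ m in atTop, 0 < r m) (hr1 : ∀ᶠ m in atTop, r m < 1)
    (hr : Tendsto r atTop (nhds 1))
    (hlim : Tendsto (fun m => (ℓ m : ℝ) * (1 - r m)) atTop (nhds c)) :
    Tendsto (fun m => r m ^ ℓ m) atTop (nhds (Real.exp (-c))) := by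
  have hslope : Tendsto (fun x : ℝ => Real.log x / (x - 1)) (nhdsWithin 1 {(1:ℝ)}ᶜ) (nhds 1) := by
    have h := (Real.hasDerivAt_log one_ne_zero)
    rw [hasDerivAt_iff_tendsto_slope] at h
    simp only [slope_def_field, inv_one] at h
    refine h.congr' ?_
    filter_upwards [self_mem_nhdsWithin] with x hx
    simp [slope, Real.log_one, div_eq_inv_mul]
  have hrne : Tendsto r atTop (nhdsWithin 1 {(1:ℝ)}ᶜ) := by
    rw [tendsto_nhdsWithin_iff]
    exact ⟨hr, hr1.mono fun m hm => by simp [ne_of_lt hm]⟩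
  have h2 : Tendsto (fun m => Real.log (r m) / (r m - 1)) atTop (nhds 1) :=
    hslope.comp hrne
  have h3 : Tendsto (fun m => (ℓ m : ℝ) * Real.log (r m)) atTop (nhds (-c)) := by
    have := (hlim.mul h2).neg
    rw [mul_one] at this
    refine this.congr' ?_
    filter_upwards [hr1] with m hm
    have : r m - 1 ≠ 0 := by intro h; nlinarith
    field_simp
    ring
  have h4 := (Real.continuous_exp.tendsto _).comp h3
  refine h4.congr' ?_
  filter_upwards [hr0] with m hm
  rw [Function.comp, Real.exp_nat_mul, Real.exp_log hm]

lemma ratio_eq (a b k : ℕ) (hka : k ≤ a) (hab : a ≤ b) :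
    ((a.choose k : ℝ) / (b.choose k : ℝ)) =
      ∏ i ∈ range k, (((a : ℝ) - i) / ((b : ℝ) - i)) := by
  have hkb : k ≤ b := hka.trans hab
  have hfa : (a.descFactorial k : ℝ) = ∏ i ∈ range k, ((a : ℝ) - i) := by
    rw [Nat.descFactorial_eq_prod_range]
    push_cast
    refine Finset.prod_congr rfl fun i hi => ?_
    rw [Nat.cast_sub]
    exact le_trans (Finset.mem_range.1 hi).le hka
  have hfb : (b.descFactorial k : ℝ) = ∏ i ∈ range k, ((b : ℝ) - i) := by
    rw [Nat.descFactorial_eq_prod_range]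
    push_cast
    refine Finset.prod_congr rfl fun i hi => ?_
    rw [Nat.cast_sub]
    exact le_trans (Finset.mem_range.1 hi).le hkb
  have ha := Nat.descFactorial_eq_factorial_mul_choose a k
  have hb := Nat.descFactorial_eq_factorial_mul_choose b k
  have hbpos : (0:ℝ) < b.choose k := by exact_mod_cast Nat.choose_pos hkb
  have hk : (0:ℝ) < (k.factorial : ℝ) := by exact_mod_cast k.factorial_pos
  rw [Finset.prod_div_distrib, ← hfa, ← hfb, ha, hb]
  push_cast
  field_simp

lemma ratio_upper (a b k : ℕ) (hka : k ≤ a) (hab : a ≤ b) (hb : 0 < b) :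
    ((a.choose k : ℝ) / (b.choose k : ℝ)) ≤ ((a : ℝ) / b) ^ k := by
  rw [ratio_eq a b k hka hab]
  refine le_trans (Finset.prod_le_prod (g := fun _ => (a:ℝ)/b) ?_ ?_) (by simp [div_pow]) <;> intro i hi
  · have hi' : (i : ℝ) < k := by exact_mod_cast Finset.mem_range.1 hi
    have h1 : (0:ℝ) ≤ (a:ℝ) - i := by
      have : (k:ℝ) ≤ a := by exact_mod_cast hka
      linarith
    have h2 : (0:ℝ) < (b:ℝ) - i := by
      have : (k:ℝ) ≤ b := by exact_mod_cast hka.trans hab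
      linarith
    positivity
  · have hi' : (0:ℝ) ≤ (i : ℝ) := by positivity
    have hik : (i : ℝ) < k := by exact_mod_cast Finset.mem_range.1 hi
    have hka' : (k:ℝ) ≤ a := by exact_mod_cast hka
    have hab' : (a:ℝ) ≤ b := by exact_mod_cast hab
    have h2 : (0:ℝ) < (b:ℝ) - i := by linarith
    have hb' : (0:ℝ) < (b:ℝ) := by linarith
    rw [div_le_div_iff₀ h2 hb']
    nlinarith

lemma ratio_lower (a b k : ℕ) (hka : k ≤ a) (hab : a ≤ b) :
    (((a : ℝ) - k) / ((b : ℝ) - k)) ^ k ≤ ((a.choose k : ℝ) / (b.choose k : ℝ)) := by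
  rcases eq_or_lt_of_le hka with h | hka'
  · subst h; rcases eq_or_lt_of_le hab with h | hab'
    · subst h; simp [pow_le_one₀]
    · have hb : ((k:ℝ) - k) / ((b:ℝ) - k) = 0 := by
        rw [sub_self, zero_div]
      rw [hb]
      rcases Nat.eq_zero_or_pos k with h0 | h0
      · simp [h0]
      · rw [zero_pow h0.ne']
        positivity
  · rw [ratio_eq a b k hka hab]
    have hka'' : (k:ℝ) < a := by exact_mod_cast hka'
    have hab' : (a:ℝ) ≤ b := by exact_mod_cast hab
    have heq : (((a:ℝ)-k)/((b:ℝ)-k))^k = ∏ _i ∈ Finset.range k, (((a:ℝ)-k)/((b:ℝ)-k)) := by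
      simp [div_pow]
    refine le_trans (le_of_eq heq) (Finset.prod_le_prod ?_ ?_) <;> intro i hi
    · have h1 : (0:ℝ) < (a:ℝ) - k := by linarith
      have h2 : (0:ℝ) < (b:ℝ) - k := by linarith
      positivity
    · have hi' : (0:ℝ) ≤ (i : ℝ) := by positivity
      have hik : (i : ℝ) < k := by exact_mod_cast Finset.mem_range.1 hi
      have h2 : (0:ℝ) < (b:ℝ) - k := by linarith
      have h3 : (0:ℝ) < (b:ℝ) - i := by linarith
      rw [div_le_div_iff₀ h2 h3]
      nlinarith

/-- Fix a prime power `q`, `n ≥ 2` and `2 ≤ d ≤ n`. For `m ≥ n` let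
`ℓ_m = (B_m − 1)/(q−1)` where `B_m = Σ_{i=0}^{d−1} [n choose i]_q ∏_{j=0}^{i−1}(q^m−q^j)`
is the number of `n×m` matrices over `F_q` of rank at most `d−1`. Then
`C((q^{mn}−q^{m(n−d+1)})/(q−1), ℓ_m) / C((q^{mn}−1)/(q−1), ℓ_m)` converges, as `m → ∞`,
to `exp(−[n choose d−1]_q/(q−1))`. -/
theorem stmt9 (q n d : ℕ) (hq : IsPrimePow q) (hn : 2 ≤ n) (hd1 : 2 ≤ d) (hd2 : d ≤ n)
    (ℓ : ℕ → ℕ)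
    (hℓ : ∀ m, n ≤ m → (ℓ m : ℚ) * ((q : ℚ) - 1) =
      (∑ i ∈ Finset.range d, qBin q n i * ∏ j ∈ Finset.range i, ((q : ℚ) ^ m - q ^ j)) - 1) :
    Tendsto (fun m : ℕ =>
        ((((q ^ (m * n) - q ^ (m * (n - d + 1))) / (q - 1)).choose (ℓ m) : ℝ) /
          ((((q ^ (m * n) - 1) / (q - 1)).choose (ℓ m) : ℕ) : ℝ)))
      atTop (nhds (Real.exp (-((qBin q n (d - 1) : ℚ) : ℝ) / ((q : ℝ) - 1)))) := by
  have hq2 : 2 ≤ q := hq.two_le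
  set Q : ℝ := (q : ℝ) with hQdef
  have hQ1 : (1:ℝ) < Q := by rw [hQdef]; exact_mod_cast hq2
  have hQ0 : (0:ℝ) < Q := by linarith
  have hQm1 : (0:ℝ) < Q - 1 := by linarith
  have hQne : Q ≠ 0 := ne_of_gt hQ0
  have hQm1ne : Q - 1 ≠ 0 := ne_of_gt hQm1
  set K : ℕ → ℕ := fun m => (q ^ (m * n) - q ^ (m * (n - d + 1))) / (q - 1) with hKdef
  set N : ℕ → ℕ := fun m => (q ^ (m * n) - 1) / (q - 1) with hNdef
  -- cast facts
  have hcq1 : ((q - 1 : ℕ) : ℝ) = Q - 1 := by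
    rw [Nat.cast_sub (by omega), Nat.cast_one, hQdef]
  have hcq1ne : ((q - 1 : ℕ) : ℝ) ≠ 0 := by rw [hcq1]; exact hQm1ne
  have hpowle : ∀ m : ℕ, q ^ (m * (n - d + 1)) ≤ q ^ (m * n) :=
    fun m => Nat.pow_le_pow_right (by omega) (Nat.mul_le_mul_left m (by omega))
  have hone_le : ∀ m : ℕ, 1 ≤ q ^ (m * n) := fun m => Nat.one_le_pow _ _ (by omega)
  have hKc : ∀ m : ℕ, (K m : ℝ) = (Q ^ (m * n) - Q ^ (m * (n - d + 1))) / (Q - 1) := by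
    intro m
    rw [hKdef]
    rw [Nat.cast_div (dvd_pow_sub_pow_of_le q _ _
      (Nat.mul_le_mul_left m (by omega))) hcq1ne]
    rw [Nat.cast_sub (hpowle m), hcq1]
    push_cast
    rfl
  have hNc : ∀ m : ℕ, (N m : ℝ) = (Q ^ (m * n) - 1) / (Q - 1) := by
    intro m
    rw [hNdef]
    rw [Nat.cast_div (by simpa using Nat.sub_dvd_pow_sub_pow q 1 (m * n)) hcq1ne]
    rw [Nat.cast_sub (hone_le m), hcq1]
    push_cast
    rfl
  have hNpos : ∀ m : ℕ, 1 ≤ m → 0 < N m := by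
    intro m hm
    have hmn : 1 ≤ m * n := Nat.one_le_iff_ne_zero.2 (Nat.mul_ne_zero (by omega) (by omega))
    have h1 : q ≤ q ^ (m * n) := by
      calc q = q ^ 1 := (pow_one q).symm
      _ ≤ q ^ (m * n) := Nat.pow_le_pow_right (by omega) hmn
    rw [hNdef]
    exact Nat.div_pos (by omega) (by omega)
  have hKN : ∀ m : ℕ, 1 ≤ m → K m < N m := by
    intro m hm
    have hmn1 : 1 ≤ m * (n - d + 1) :=
      Nat.one_le_iff_ne_zero.2 (Nat.mul_ne_zero (by omega) (by omega))
    have h1 : (1:ℝ) < Q ^ (m * (n - d + 1)) := one_lt_pow₀ hQ1 (by omega)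
    have h2 : (K m : ℝ) < N m := by
      rw [hKc m, hNc m, div_lt_div_iff₀ hQm1 hQm1]
      nlinarith
    exact_mod_cast h2
  -- ℓ asymptotics
  have hre : ∀ m : ℕ, n ≤ m → (ℓ m : ℝ) * (Q - 1) =
      (∑ i ∈ Finset.range d, ((qBin q n i : ℚ) : ℝ) *
        ∏ j ∈ Finset.range i, (Q ^ m - Q ^ j)) - 1 := by
    intro m hm
    have h2 := congrArg (fun x : ℚ => (x : ℝ)) (hℓ m hm)
    push_cast at h2
    rw [hQdef]
    exact h2
  have Hterm : ∀ i ∈ Finset.range d, Tendsto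
      (fun m : ℕ => ((qBin q n i : ℚ) : ℝ) * (∏ j ∈ Finset.range i, (Q ^ m - Q ^ j))
        / Q ^ (m * (d - 1))) atTop
      (nhds (if i = d - 1 then ((qBin q n (d-1) : ℚ) : ℝ) else 0)) := by
    intro i hi
    by_cases hieq : i = d - 1
    · subst hieq
      rw [if_pos rfl]
      have h := (lemP Q hQ1 (d-1)).const_mul ((qBin q n (d-1) : ℚ) : ℝ)
      rw [mul_one] at h
      exact h.congr fun m => by rw [mul_div_assoc]
    · have hilt : i < d - 1 := by have := Finset.mem_range.1 hi; omega
      rw [if_neg hieq]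
      have h := ((lemP Q hQ1 i).const_mul ((qBin q n i : ℚ) : ℝ)).mul
        (tendsto_pow_mul_div_pow_mul Q hQ1 i (d - 1) hilt)
      rw [mul_one, mul_zero] at h
      refine h.congr fun m => ?_
      have hne1 : Q ^ (m * i) ≠ 0 := pow_ne_zero _ hQne
      have hne2 : Q ^ (m * (d - 1)) ≠ 0 := pow_ne_zero _ hQne
      field_simp
      try ring
      try exact Or.inl trivial
  have Tsum : Tendsto (fun m : ℕ => (∑ i ∈ Finset.range d, ((qBin q n i : ℚ) : ℝ) *
      ∏ j ∈ Finset.range i, (Q ^ m - Q ^ j)) / Q ^ (m * (d - 1))) atTop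
      (nhds (((qBin q n (d-1) : ℚ) : ℝ))) := by
    have h := tendsto_finset_sum (Finset.range d) Hterm
    have hval : (∑ i ∈ Finset.range d,
        if i = d - 1 then ((qBin q n (d-1) : ℚ) : ℝ) else 0)
        = ((qBin q n (d-1) : ℚ) : ℝ) := by
      rw [Finset.sum_ite_eq' (Finset.range d) (d-1) (fun _ => ((qBin q n (d-1) : ℚ) : ℝ))]
      rw [if_pos (Finset.mem_range.2 (by omega))]
    rw [hval] at h
    exact h.congr fun m => (Finset.sum_div _ _ _).symm
  have Lℓ : Tendsto (fun m : ℕ => (ℓ m : ℝ) / Q ^ (m * (d - 1))) atTop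
      (nhds (((qBin q n (d-1) : ℚ) : ℝ) / (Q - 1))) := by
    have h := (Tsum.sub (tendsto_one_div_pow_mul Q hQ1 (d - 1) (by omega))).div_const (Q - 1)
    rw [sub_zero] at h
    refine h.congr' ?_
    filter_upwards [eventually_ge_atTop n] with m hm
    have h1 := hre m hm
    have hp : Q ^ (m * (d - 1)) ≠ 0 := pow_ne_zero _ hQne
    field_simp
    try linear_combination h1
    try linear_combination (Q ^ (m * (d - 1))) * h1
    try linear_combination (-(Q ^ (m * (d - 1)))) * h1
    linear_combination -h1
  -- normalized limits for K, N, N-K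
  have LN : Tendsto (fun m : ℕ => (N m : ℝ) / Q ^ (m * n)) atTop (nhds (1 / (Q - 1))) := by
    have h := ((tendsto_const_nhds : Tendsto (fun _ : ℕ => (1:ℝ)) atTop (nhds 1)).sub
      (tendsto_one_div_pow_mul Q hQ1 n (by omega))).div_const (Q - 1)
    rw [sub_zero] at h
    refine h.congr fun m => ?_
    rw [hNc m]
    have hp : Q ^ (m * n) ≠ 0 := pow_ne_zero _ hQne
    field_simp
    try ring
    try exact Or.inl trivial
    try trivial
  have LK : Tendsto (fun m : ℕ => (K m : ℝ) / Q ^ (m * n)) atTop (nhds (1 / (Q - 1))) := by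
    have h := ((tendsto_const_nhds : Tendsto (fun _ : ℕ => (1:ℝ)) atTop (nhds 1)).sub
      (tendsto_pow_mul_div_pow_mul Q hQ1 (n - d + 1) n (by omega))).div_const (Q - 1)
    rw [sub_zero] at h
    refine h.congr fun m => ?_
    rw [hKc m]
    have hp : Q ^ (m * n) ≠ 0 := pow_ne_zero _ hQne
    field_simp
    try ring
    try exact Or.inl trivial
    try trivial
  have LNK : Tendsto (fun m : ℕ => ((N m : ℝ) - K m) / Q ^ (m * (n - d + 1))) atTop
      (nhds (1 / (Q - 1))) := by
    have h := ((tendsto_const_nhds : Tendsto (fun _ : ℕ => (1:ℝ)) atTop (nhds 1)).sub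
      (tendsto_one_div_pow_mul Q hQ1 (n - d + 1) (by omega))).div_const (Q - 1)
    rw [sub_zero] at h
    refine h.congr fun m => ?_
    rw [hNc m, hKc m]
    have hp : Q ^ (m * (n - d + 1)) ≠ 0 := pow_ne_zero _ hQne
    field_simp
    try ring
    try exact Or.inl trivial
    try trivial
  have hQinv_ne : (1:ℝ) / (Q - 1) ≠ 0 := by positivity
  -- r = K/N
  have hrlim : Tendsto (fun m : ℕ => (K m : ℝ) / (N m : ℝ)) atTop (nhds 1) := by
    have h := LK.div LN hQinv_ne
    rw [div_self hQinv_ne] at h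
    refine h.congr' ?_
    filter_upwards [eventually_ge_atTop 1] with m hm
    have hN : (N m : ℝ) ≠ 0 := by exact_mod_cast (hNpos m hm).ne'
    have hp : Q ^ (m * n) ≠ 0 := pow_ne_zero _ hQne
    simp only [Pi.div_apply]
    field_simp
  have hℓQn : Tendsto (fun m : ℕ => (ℓ m : ℝ) / Q ^ (m * n)) atTop (nhds 0) := by
    have h := Lℓ.mul (tendsto_pow_mul_div_pow_mul Q hQ1 (d - 1) n (by omega))
    rw [mul_zero] at h
    refine h.congr fun m => ?_
    have hp1 : Q ^ (m * (d - 1)) ≠ 0 := pow_ne_zero _ hQne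
    have hp2 : Q ^ (m * n) ≠ 0 := pow_ne_zero _ hQne
    field_simp
    try ring
    try exact Or.inl trivial
    try trivial
  have hℓN : Tendsto (fun m : ℕ => (ℓ m : ℝ) / (N m : ℝ)) atTop (nhds 0) := by
    have h := hℓQn.div LN hQinv_ne
    rw [zero_div] at h
    refine h.congr' ?_
    filter_upwards [eventually_ge_atTop 1] with m hm
    have hN : (N m : ℝ) ≠ 0 := by exact_mod_cast (hNpos m hm).ne'
    have hp : Q ^ (m * n) ≠ 0 := pow_ne_zero _ hQne
    simp only [Pi.div_apply]
    field_simp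
  have hℓK : ∀ᶠ m : ℕ in atTop, ℓ m ≤ K m := by
    have h := hℓQn.eventually_lt LK (by positivity)
    filter_upwards [h] with m hm
    have hp : (0:ℝ) < Q ^ (m * n) := by positivity
    have h2 : (ℓ m : ℝ) < K m := by
      have := mul_lt_mul_of_pos_right hm hp
      rwa [div_mul_cancel₀ _ (ne_of_gt hp), div_mul_cancel₀ _ (ne_of_gt hp)] at this
    exact_mod_cast h2.le
  have hℓltN : ∀ᶠ m : ℕ in atTop, ℓ m < N m := by
    filter_upwards [hℓK, eventually_ge_atTop 1] with m h1 h2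
    exact lt_of_le_of_lt h1 (hKN m h2)
  -- core limit
  have hcore : Tendsto (fun m : ℕ => (ℓ m : ℝ) * (1 - (K m : ℝ) / (N m : ℝ))) atTop
      (nhds (((qBin q n (d-1) : ℚ) : ℝ) / (Q - 1))) := by
    have h := (Lℓ.mul LNK).div LN hQinv_ne
    have hval : (((qBin q n (d-1) : ℚ) : ℝ) / (Q - 1) * (1 / (Q - 1))) / (1 / (Q - 1))
        = ((qBin q n (d-1) : ℚ) : ℝ) / (Q - 1) := by
      rw [mul_div_assoc, div_self hQinv_ne, mul_one]
    rw [hval] at h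
    refine h.congr' ?_
    filter_upwards [eventually_ge_atTop 1] with m hm
    have hN : (N m : ℝ) ≠ 0 := by exact_mod_cast (hNpos m hm).ne'
    have hexp : m * (d - 1) + m * (n - d + 1) = m * n := by
      rw [← Nat.mul_add]
      congr 1
      omega
    have hp1 : Q ^ (m * (d - 1)) ≠ 0 := pow_ne_zero _ hQne
    have hp2 : Q ^ (m * (n - d + 1)) ≠ 0 := pow_ne_zero _ hQne
    simp only [Pi.div_apply]
    rw [← hexp, pow_add]
    field_simp
    try ring
    try exact Or.inl trivial
    try trivial
  -- positivity of the limit constant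
  have hrBpos : (0:ℝ) < ((qBin q n (d-1) : ℚ) : ℝ) := by
    have h : (0:ℚ) < qBin q n (d-1) := by
      unfold qBin
      apply Finset.prod_pos
      intro l hl
      have hl' : l < d - 1 := Finset.mem_range.1 hl
      have hq1 : (1:ℚ) < (q:ℚ) := by exact_mod_cast hq2
      apply div_pos
      · rw [sub_pos]
        exact pow_lt_pow_right₀ hq1 (by omega)
      · rw [sub_pos]
        exact pow_lt_pow_right₀ hq1 hl'
    exact_mod_cast h
  have hcpos : (0:ℝ) < ((qBin q n (d-1) : ℚ) : ℝ) / (Q - 1) := by positivity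
  -- apply lemA to r
  have hr0 : ∀ᶠ m : ℕ in atTop, 0 < (K m : ℝ) / (N m : ℝ) :=
    hrlim.eventually (eventually_gt_nhds (by norm_num))
  have hr1 : ∀ᶠ m : ℕ in atTop, (K m : ℝ) / (N m : ℝ) < 1 := by
    filter_upwards [eventually_ge_atTop 1] with m hm
    have hN : (0:ℝ) < (N m : ℝ) := by exact_mod_cast hNpos m hm
    rw [div_lt_one hN]
    exact_mod_cast hKN m hm
  have Gr := lemA (fun m => (K m : ℝ) / (N m : ℝ)) ℓ _ hr0 hr1 hrlim hcore
  -- s = (K-ℓ)/(N-ℓ)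
  have hs : Tendsto (fun m : ℕ => ((K m : ℝ) - ℓ m) / ((N m : ℝ) - ℓ m)) atTop (nhds 1) := by
    have h := (hrlim.sub hℓN).div
      ((tendsto_const_nhds : Tendsto (fun _ : ℕ => (1:ℝ)) atTop (nhds 1)).sub hℓN) (by norm_num)
    rw [sub_zero, div_one] at h
    refine h.congr' ?_
    filter_upwards [eventually_ge_atTop 1, hℓltN] with m hm hmN
    have hN : (N m : ℝ) ≠ 0 := by exact_mod_cast (hNpos m hm).ne'
    have hNl : (N m : ℝ) - ℓ m ≠ 0 := by
      have : (ℓ m : ℝ) < N m := by exact_mod_cast hmN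
      linarith
    simp only [Pi.div_apply]
    field_simp
    try ring
    try exact Or.inl trivial
    try trivial
  have hscore : Tendsto (fun m : ℕ => (ℓ m : ℝ) * (1 - ((K m : ℝ) - ℓ m) / ((N m : ℝ) - ℓ m)))
      atTop (nhds (((qBin q n (d-1) : ℚ) : ℝ) / (Q - 1))) := by
    have h := hcore.div
      ((tendsto_const_nhds : Tendsto (fun _ : ℕ => (1:ℝ)) atTop (nhds 1)).sub hℓN) (by norm_num)
    rw [sub_zero, div_one] at h
    refine h.congr' ?_
    filter_upwards [eventually_ge_atTop 1, hℓltN] with m hm hmN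
    have hN : (N m : ℝ) ≠ 0 := by exact_mod_cast (hNpos m hm).ne'
    have hNl : (N m : ℝ) - ℓ m ≠ 0 := by
      have : (ℓ m : ℝ) < N m := by exact_mod_cast hmN
      linarith
    simp only [Pi.div_apply]
    field_simp
    try ring
    try exact Or.inl trivial
    try trivial
  have hs0 : ∀ᶠ m : ℕ in atTop, 0 < ((K m : ℝ) - ℓ m) / ((N m : ℝ) - ℓ m) :=
    hs.eventually (eventually_gt_nhds (by norm_num))
  have hs1 : ∀ᶠ m : ℕ in atTop, ((K m : ℝ) - ℓ m) / ((N m : ℝ) - ℓ m) < 1 := by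
    filter_upwards [eventually_ge_atTop 1, hℓltN] with m hm hmN
    have hKNr : (K m : ℝ) < N m := by exact_mod_cast hKN m hm
    have hNl : (0:ℝ) < (N m : ℝ) - ℓ m := by
      have : (ℓ m : ℝ) < N m := by exact_mod_cast hmN
      linarith
    rw [div_lt_one hNl]
    linarith
  have Gs := lemA (fun m => ((K m : ℝ) - ℓ m) / ((N m : ℝ) - ℓ m)) ℓ _ hs0 hs1 hs hscore
  -- squeeze
  have HH : Tendsto (fun m : ℕ => (((K m).choose (ℓ m) : ℕ) : ℝ) / (((N m).choose (ℓ m) : ℕ) : ℝ))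
      atTop (nhds (Real.exp (-(((qBin q n (d-1) : ℚ) : ℝ) / (Q - 1))))) := by
    refine tendsto_of_tendsto_of_tendsto_of_le_of_le' Gs Gr ?_ ?_
    · filter_upwards [hℓK, eventually_ge_atTop 1] with m h1 h2
      exact ratio_lower (K m) (N m) (ℓ m) h1 (le_of_lt (hKN m h2))
    · filter_upwards [hℓK, eventually_ge_atTop 1] with m h1 h2
      exact ratio_upper (K m) (N m) (ℓ m) h1 (le_of_lt (hKN m h2)) (hNpos m h2)
  have hfinal : Real.exp (-((qBin q n (d - 1) : ℚ) : ℝ) / ((q : ℝ) - 1))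
      = Real.exp (-(((qBin q n (d-1) : ℚ) : ℝ) / (Q - 1))) := by
    rw [neg_div, hQdef]
  rw [hfinal]
  simp only [hKdef, hNdef] at HH
  exact HH
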